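/- arXiv:2511.10827 — 2 statements merged into one kernel-verified Lean document; each statement's English description precedes it below -/
import Mathlib

section
/- Let m ≥ 1 be an integer and let α, b, c be reals with 1/2 ≤ α < 1, 0 < b ≤ m, and 0 < c ≤ b/(m+1). Set v = 1 − (1−α)b/m − αb/(m+1) + (1−α)c/(m(m+1)). Then: (i) for every probability distribution q on ℕ with mean b and Σ_{i≥0} q(2i+1) ≥ c, one has H(y^{m,α}, q) ≥ v; and (ii) the probability distribution y = (1 − (b−c)/m)·δ_0 + c·u^o_{m+1} + ((b − c(m+1))/m)·u^e_m has mean b and satisfies Σ_{i≥0} y(2i+1) = c, and for every probability distribution p on ℕ with mean m+α, one has H(p, y) ≤ v. In particular, v is the value of the constrained General Lotto game in which player A chooses a distribution on ℕ with mean m+α and player B chooses a distribution on ℕ with mean b whose total mass on odd numbers is at least c. -/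
open scoped BigOperators

/-- A probability distribution on ℕ. -/
def IsPMF (p : ℕ → ℝ) : Prop := (∀ i, 0 ≤ p i) ∧ (∑' i, p i) = 1

/-- `p` has (finite) mean `b`. -/
def HasMean (p : ℕ → ℝ) (b : ℝ) : Prop :=
  Summable (fun i : ℕ => (i:ℝ) * p i) ∧ (∑' i : ℕ, (i:ℝ) * p i) = b

/-- Point mass distribution at `n`. -/
noncomputable def delta (n : ℕ) : ℕ → ℝ := fun i => if i = n then 1 else 0

/-- Uniform distribution on the `m` odd numbers `1,3,…,2m-1`. -/
noncomputable def uo (m : ℕ) : ℕ → ℝ := fun i => if Odd i ∧ i < 2*m then (1:ℝ)/m else 0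

/-- Uniform distribution on the `m+1` even numbers `0,2,…,2m`. -/
noncomputable def ue (m : ℕ) : ℕ → ℝ := fun i => if Even i ∧ i ≤ 2*m then (1:ℝ)/(m+1) else 0

/-- The General Lotto payoff
`H(p,q) = Σ_{(i,j): i>j} p i · q j − Σ_{(i,j): i<j} p i · q j`. -/
noncomputable def Hpay (p q : ℕ → ℝ) : ℝ :=
  (∑' ij : ℕ × ℕ, if ij.2 < ij.1 then p ij.1 * q ij.2 else 0)
  - (∑' ij : ℕ × ℕ, if ij.1 < ij.2 then p ij.1 * q ij.2 else 0)

/-- The distribution y^{m,α}: y(2i−1) = 2(1−α)/m + (2α−1)/(m+1) − 2i(1−α)/(m(m+1)),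
y(2i) = 2i(1−α)/(m(m+1)) for i = 1,…,m, y(2m+1) = (2α−1)/(m+1), 0 elsewhere. -/
noncomputable def yma (m : ℕ) (α : ℝ) : ℕ → ℝ := fun j =>
  if j = 0 then 0
  else if j ≤ 2*m then
    (if j % 2 = 1 then
        2*(1-α)/(m:ℝ) + (2*α-1)/((m:ℝ)+1) - ((j:ℝ)+1)*(1-α)/((m:ℝ)*((m:ℝ)+1))
     else (j:ℝ)*(1-α)/((m:ℝ)*((m:ℝ)+1)))
  else if j = 2*m+1 then (2*α-1)/((m:ℝ)+1)
  else 0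

private lemma summable_of_pmf {p : ℕ → ℝ} (h1 : (∑' i, p i) = 1) : Summable p := by
  by_contra h
  rw [tsum_eq_zero_of_not_summable h] at h1; norm_num at h1


private lemma pairsum (f : ℕ → ℝ) (n : ℕ) :
    ∑ i ∈ Finset.range (2*n), f i = ∑ k ∈ Finset.range n, (f (2*k) + f (2*k+1)) := by
  induction n with
  | zero => simp
  | succ n ih =>
    have h : 2 * (n+1) = (2*n) + 1 + 1 := by ring
    rw [h, Finset.sum_range_succ, Finset.sum_range_succ, ih, Finset.sum_range_succ]
    ring


private lemma Hpay_flip (p q : ℕ → ℝ) : Hpay p q = - Hpay q p := by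
  unfold Hpay
  have h1 : (∑' ij : ℕ × ℕ, if ij.2 < ij.1 then p ij.1 * q ij.2 else 0)
      = (∑' ij : ℕ × ℕ, if ij.1 < ij.2 then q ij.1 * p ij.2 else 0) := by
    rw [← (Equiv.prodComm ℕ ℕ).tsum_eq
      (fun ij : ℕ × ℕ => if ij.1 < ij.2 then q ij.1 * p ij.2 else 0)]
    exact tsum_congr (fun ij => by simp [Equiv.prodComm, mul_comm])
  have h2 : (∑' ij : ℕ × ℕ, if ij.1 < ij.2 then p ij.1 * q ij.2 else 0)
      = (∑' ij : ℕ × ℕ, if ij.2 < ij.1 then q ij.1 * p ij.2 else 0) := by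
    rw [← (Equiv.prodComm ℕ ℕ).tsum_eq
      (fun ij : ℕ × ℕ => if ij.2 < ij.1 then q ij.1 * p ij.2 else 0)]
    exact tsum_congr (fun ij => by simp [Equiv.prodComm, mul_comm])
  rw [h1, h2]; ring

private lemma summable_mul_bounded {p h : ℕ → ℝ} (hp0 : ∀ i, 0 ≤ p i) (hps : Summable p)
    (C : ℝ) (hb : ∀ i, |h i| ≤ C) : Summable (fun i => p i * h i) := by
  have h1 : Summable (fun i => p i * (h i + C)) :=
    Summable.of_nonneg_of_le
      (fun i => mul_nonneg (hp0 i) (by have := abs_le.1 (hb i); linarith))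
      (fun i => mul_le_mul_of_nonneg_left (by have := abs_le.1 (hb i); linarith) (hp0 i))
      (hps.mul_right (2*C))
  have h2 := h1.sub (hps.mul_right C)
  have h3 : (fun i => p i * h i) = fun i => p i * (h i + C) - p i * C := by
    funext i; ring
  rw [h3]; exact h2


private lemma Hpay_decomp (p q : ℕ → ℝ) (N : ℕ)
    (hp0 : ∀ i, 0 ≤ p i) (hps : Summable p)
    (hq0 : ∀ j, 0 ≤ q j) (hqN : ∀ j, N ≤ j → q j = 0) :
    Hpay p q = ∑' i, p i *
      ((∑ j ∈ Finset.range N, if j < i then q j else 0)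
        - (∑ j ∈ Finset.range N, if i < j then q j else 0)) := by
  classical
  have hqs : Summable q := by
    apply summable_of_ne_finset_zero (s := Finset.range N)
    intro j hj
    exact hqN j (by simpa using hj)
  have hQ : ∀ j, q j ≤ 1 * q j := by intro j; rw [one_mul]
  have hprod : Summable (fun ij : ℕ × ℕ => p ij.1 * q ij.2) :=
    hps.mul_of_nonneg hqs hp0 hq0
  have ite_nonneg : ∀ (c : Prop) [Decidable c] (x : ℝ), 0 ≤ x → 0 ≤ (if c then x else 0) := by
    intro c _ x hx; split <;> simp [hx]
  have ite_le : ∀ (c : Prop) [Decidable c] (x : ℝ), 0 ≤ x → (if c then x else 0) ≤ x := by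
    intro c _ x hx; split <;> simp [hx]
  have hs1 : Summable (fun ij : ℕ × ℕ => if ij.2 < ij.1 then p ij.1 * q ij.2 else 0) :=
    Summable.of_nonneg_of_le
      (fun ij => ite_nonneg _ _ (mul_nonneg (hp0 _) (hq0 _)))
      (fun ij => ite_le _ _ (mul_nonneg (hp0 _) (hq0 _))) hprod
  have hs2 : Summable (fun ij : ℕ × ℕ => if ij.1 < ij.2 then p ij.1 * q ij.2 else 0) :=
    Summable.of_nonneg_of_le
      (fun ij => ite_nonneg _ _ (mul_nonneg (hp0 _) (hq0 _)))
      (fun ij => ite_le _ _ (mul_nonneg (hp0 _) (hq0 _))) hprod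
  have hinner1 : ∀ i : ℕ, (∑' j, if (j:ℕ) < i then p i * q j else 0)
      = p i * (∑ j ∈ Finset.range N, if j < i then q j else 0) := by
    intro i
    rw [tsum_eq_sum (s := Finset.range N) (fun j hj => by
      rw [hqN j (by simpa using hj), mul_zero]; split <;> rfl)]
    rw [Finset.mul_sum]
    exact Finset.sum_congr rfl (fun j _ => by split <;> simp
    )
  have hinner2 : ∀ i : ℕ, (∑' j, if i < (j:ℕ) then p i * q j else 0)
      = p i * (∑ j ∈ Finset.range N, if i < j then q j else 0) := by
    intro i
    rw [tsum_eq_sum (s := Finset.range N) (fun j hj => by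
      rw [hqN j (by simpa using hj), mul_zero]; split <;> rfl)]
    rw [Finset.mul_sum]
    exact Finset.sum_congr rfl (fun j _ => by split <;> simp)
  have hfib1 : ∀ i : ℕ, Summable (fun j : ℕ => if (j:ℕ) < i then p i * q j else 0) := by
    intro i
    apply summable_of_ne_finset_zero (s := Finset.range N)
    intro j hj
    rw [hqN j (by simpa using hj), mul_zero]; split <;> rfl
  have hfib2 : ∀ i : ℕ, Summable (fun j : ℕ => if i < (j:ℕ) then p i * q j else 0) := by
    intro i
    apply summable_of_ne_finset_zero (s := Finset.range N)
    intro j hj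
    rw [hqN j (by simpa using hj), mul_zero]; split <;> rfl
  have e1 : (∑' ij : ℕ × ℕ, if ij.2 < ij.1 then p ij.1 * q ij.2 else 0)
      = ∑' i, p i * (∑ j ∈ Finset.range N, if j < i then q j else 0) := by
    rw [Summable.tsum_prod' hs1 (fun i => hfib1 i)]
    exact tsum_congr (fun i => hinner1 i)
  have e2 : (∑' ij : ℕ × ℕ, if ij.1 < ij.2 then p ij.1 * q ij.2 else 0)
      = ∑' i, p i * (∑ j ∈ Finset.range N, if i < j then q j else 0) := by
    rw [Summable.tsum_prod' hs2 (fun i => hfib2 i)]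
    exact tsum_congr (fun i => hinner2 i)
  have Qbound : ∀ (P : ℕ → Prop) [DecidablePred P] (i : ℕ),
      |∑ j ∈ Finset.range N, if P j then q j else 0| ≤ ∑ j ∈ Finset.range N, q j := by
    intro P _ i
    rw [abs_of_nonneg (Finset.sum_nonneg (fun j _ => ite_nonneg _ _ (hq0 j)))]
    exact Finset.sum_le_sum (fun j _ => ite_le _ _ (hq0 j))
  have hsA : Summable (fun i => p i * (∑ j ∈ Finset.range N, if j < i then q j else 0)) :=
    summable_mul_bounded hp0 hps _ (fun i => Qbound _ i)
  have hsB : Summable (fun i => p i * (∑ j ∈ Finset.range N, if i < j then q j else 0)) :=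
    summable_mul_bounded hp0 hps _ (fun i => Qbound _ i)
  unfold Hpay
  rw [e1, e2, ← Summable.tsum_sub hsA hsB]
  exact tsum_congr (fun i => by ring)

private lemma yma_zero_of_ge (m : ℕ) (α : ℝ) (j : ℕ) (hj : 2*m+2 ≤ j) : yma m α j = 0 := by
  unfold yma
  split_ifs with h1 h2 h3 <;> first | rfl | omega

private lemma yma_pair {m : ℕ} (hm : 1 ≤ m) (α : ℝ) {j : ℕ} (hj : j ≤ 2*m) :
    yma m α j + yma m α (j+1)
      = 1/((m:ℝ)+1) + (if j % 2 = 1 then 2*((1-α)/((m:ℝ)*((m:ℝ)+1))) else 0) := by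
  have hmr : (1:ℝ) ≤ (m:ℝ) := by exact_mod_cast hm
  have hm0 : (m:ℝ) ≠ 0 := by linarith
  have hm1 : (m:ℝ)+1 ≠ 0 := by linarith
  by_cases hj0 : j = 0
  · subst hj0
    have h1 : 1 ≤ 2*m := by omega
    simp only [yma, if_pos rfl, if_neg (by omega : ¬ (1 = 0)), if_pos h1]
    norm_num
    field_simp
    try ring_nf
    try tauto
  · by_cases hodd : j % 2 = 1
    · have hjle : j ≤ 2*m - 1 := by omega
      have hj1 : j + 1 ≤ 2*m := by omega
      have hj1e : (j+1) % 2 = 0 := by omega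
      simp only [yma, if_neg hj0, if_pos hj, if_pos hodd,
        if_neg (by omega : ¬ (j+1 = 0)), if_pos hj1, if_neg (by omega : ¬ ((j+1) % 2 = 1)),
        if_pos hodd]
      push_cast
      field_simp
      try ring_nf
      try tauto
    · by_cases hjtop : j = 2*m
      · subst hjtop
        simp only [yma, if_neg hj0, if_pos hj, if_neg hodd,
          if_neg (by omega : ¬ (2*m+1 = 0)), if_neg (by omega : ¬ (2*m+1 ≤ 2*m)),
          if_pos rfl, if_neg hodd]
        push_cast
        field_simp
        try ring_nf
        try tauto
      · have hj1 : j + 1 ≤ 2*m := by omega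
        have hj1o : (j+1) % 2 = 1 := by omega
        simp only [yma, if_neg hj0, if_pos hj, if_neg hodd,
          if_neg (by omega : ¬ (j+1 = 0)), if_pos hj1, if_pos hj1o]
        push_cast
        field_simp
        try ring_nf
        try tauto


private lemma yma_total {m : ℕ} (hm : 1 ≤ m) (α : ℝ) :
    ∑ i ∈ Finset.range (2*m+2), yma m α i = 1 := by
  have h : 2*m+2 = 2*(m+1) := by ring
  rw [h, pairsum]
  have hc : ∀ k ∈ Finset.range (m+1), yma m α (2*k) + yma m α (2*k+1) = 1/((m:ℝ)+1) := by
    intro k hk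
    have hk' : 2*k ≤ 2*m := by simp at hk; omega
    rw [yma_pair hm α hk']
    simp [Nat.mul_mod_right]
  rw [Finset.sum_congr rfl hc, Finset.sum_const, Finset.card_range]
  have hm1 : ((m:ℝ)+1) ≠ 0 := by positivity
  rw [nsmul_eq_mul]
  push_cast
  field_simp

private lemma yma_nonneg {m : ℕ} (hm : 1 ≤ m) {α : ℝ} (hα0 : 1/2 ≤ α) (hα1 : α < 1) (j : ℕ) :
    0 ≤ yma m α j := by
  have hmr : (1:ℝ) ≤ (m:ℝ) := by exact_mod_cast hm
  have hM : (0:ℝ) < (m:ℝ)*((m:ℝ)+1) := by nlinarith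
  unfold yma
  split_ifs with h1 h2 h3 h4
  · exact le_rfl
  · -- odd branch
    have hjr : (j:ℝ) ≤ 2*(m:ℝ) := by exact_mod_cast (by omega : (j:ℕ) ≤ 2*m)
    have key : 2*(1-α)/(m:ℝ) + (2*α-1)/((m:ℝ)+1) - ((j:ℝ)+1)*(1-α)/((m:ℝ)*((m:ℝ)+1))
        = (2*(1-α)*((m:ℝ)+1) + (2*α-1)*(m:ℝ) - ((j:ℝ)+1)*(1-α)) / ((m:ℝ)*((m:ℝ)+1)) := by
      field_simp
      try ring
    rw [key]
    apply div_nonneg _ (le_of_lt hM)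
    nlinarith [mul_nonneg (by linarith : (0:ℝ) ≤ 1-α) (by linarith : (0:ℝ) ≤ 2*(m:ℝ)+1-(j:ℝ))]
  · apply div_nonneg _ (le_of_lt hM)
    have : (0:ℝ) ≤ (j:ℝ) := by positivity
    nlinarith
  · apply div_nonneg (by linarith) (by linarith)
  · exact le_rfl


private lemma sum_ite_lt_succ (f : ℕ → ℝ) (N j : ℕ) (hf : ∀ i, N ≤ i → f i = 0) :
    (∑ i ∈ Finset.range N, if i < j+1 then f i else 0)
      = (∑ i ∈ Finset.range N, if i < j then f i else 0) + f j := by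
  have hpt : ∀ i, (if i < j+1 then f i else 0)
      = (if i < j then f i else 0) + (if i = j then f i else 0) := by
    intro i
    by_cases h1 : i < j
    · rw [if_pos (by omega), if_pos h1, if_neg (by omega)]; ring
    · by_cases h2 : i = j
      · rw [if_pos (by omega), if_neg h1, if_pos h2]; ring
      · rw [if_neg (by omega), if_neg h1, if_neg h2]; ring
  simp_rw [hpt]
  rw [Finset.sum_add_distrib, Finset.sum_ite_eq' (Finset.range N) j f]
  by_cases hj : j ∈ Finset.range N
  · rw [if_pos hj]
  · rw [if_neg hj, hf j (by simpa using hj)]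

private lemma sum_ite_gt_succ (f : ℕ → ℝ) (N j : ℕ) (hf : ∀ i, N ≤ i → f i = 0) :
    (∑ i ∈ Finset.range N, if j+1 < i then f i else 0)
      = (∑ i ∈ Finset.range N, if j < i then f i else 0) - f (j+1) := by
  have hpt : ∀ i, (if j < i then f i else 0)
      = (if j+1 < i then f i else 0) + (if i = j+1 then f i else 0) := by
    intro i
    by_cases h1 : j+1 < i
    · rw [if_pos (by omega), if_pos h1, if_neg (by omega)]; ring
    · by_cases h2 : i = j+1
      · rw [if_pos (by omega), if_neg h1, if_pos h2]; ring
      · rw [if_neg (by omega), if_neg h1, if_neg h2]; ring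
  rw [eq_sub_iff_add_eq]
  simp_rw [hpt]
  rw [Finset.sum_add_distrib, Finset.sum_ite_eq' (Finset.range N) (j+1) f]
  by_cases hj : j+1 ∈ Finset.range N
  · rw [if_pos hj]
  · rw [if_neg hj, hf (j+1) (by simpa using hj)]

noncomputable def cdfG (f : ℕ → ℝ) (N : ℕ) (j : ℕ) : ℝ :=
  (∑ i ∈ Finset.range N, if j < i then f i else 0)
  - (∑ i ∈ Finset.range N, if i < j then f i else 0)

private lemma cdfG_succ (f : ℕ → ℝ) (N j : ℕ) (hf : ∀ i, N ≤ i → f i = 0) :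
    cdfG f N (j+1) = cdfG f N j - (f j + f (j+1)) := by
  unfold cdfG
  rw [sum_ite_lt_succ f N j hf, sum_ite_gt_succ f N j hf]
  ring

private lemma cdfG_zero (f : ℕ → ℝ) (N : ℕ) (hN : 1 ≤ N) :
    cdfG f N 0 = (∑ i ∈ Finset.range N, f i) - f 0 := by
  unfold cdfG
  have h2 : (∑ i ∈ Finset.range N, if i < 0 then f i else 0) = 0 :=
    Finset.sum_eq_zero (fun i _ => by rw [if_neg (by omega)])
  have hpt : ∀ i, (if 0 < i then f i else 0) = f i - (if i = 0 then f i else 0) := by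
    intro i
    by_cases h : i = 0
    · subst h; simp
    · rw [if_pos (by omega), if_neg h]; ring
  simp_rw [hpt]
  rw [h2, Finset.sum_sub_distrib, Finset.sum_ite_eq' (Finset.range N) 0 f,
    if_pos (by simp; omega)]
  ring

private lemma cdfG_tail (f : ℕ → ℝ) (N j : ℕ) (hj : N ≤ j) :
    cdfG f N j = - ∑ i ∈ Finset.range N, f i := by
  unfold cdfG
  have h1 : (∑ i ∈ Finset.range N, if j < i then f i else 0) = 0 :=
    Finset.sum_eq_zero (fun i hi => by rw [if_neg (by simp at hi; omega)])
  have h2 : (∑ i ∈ Finset.range N, if i < j then f i else 0) = ∑ i ∈ Finset.range N, f i :=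
    Finset.sum_congr rfl (fun i hi => by rw [if_pos (by simp at hi; omega)])
  rw [h1, h2]; ring

noncomputable def ell (m : ℕ) (α : ℝ) (j : ℕ) : ℝ :=
  1 - ((1-α)/(m:ℝ) + α/((m:ℝ)+1)) * j + (if j % 2 = 1 then (1-α)/((m:ℝ)*((m:ℝ)+1)) else 0)

private lemma ell_succ {m : ℕ} (hm : 1 ≤ m) (α : ℝ) (j : ℕ) :
    ell m α (j+1) = ell m α j
      - (1/((m:ℝ)+1) + (if j % 2 = 1 then 2*((1-α)/((m:ℝ)*((m:ℝ)+1))) else 0)) := by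
  have hmr : (1:ℝ) ≤ (m:ℝ) := by exact_mod_cast hm
  have hm0 : (m:ℝ) ≠ 0 := by linarith
  have hm1 : (m:ℝ)+1 ≠ 0 := by linarith
  by_cases h : j % 2 = 1
  · simp only [ell, if_pos h, if_neg (by omega : ¬ ((j+1) % 2 = 1))]
    push_cast
    field_simp
    ring
  · simp only [ell, if_neg h, if_pos (by omega : (j+1) % 2 = 1)]
    push_cast
    field_simp
    ring

private lemma Gm_eq_ell {m : ℕ} (hm : 1 ≤ m) (α : ℝ) :
    ∀ j, j ≤ 2*m+1 → cdfG (yma m α) (2*m+2) j = ell m α j := by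
  intro j
  induction j with
  | zero =>
    intro _
    rw [cdfG_zero _ _ (by omega), yma_total hm α]
    simp [ell, yma]
  | succ j ih =>
    intro hj
    rw [cdfG_succ _ _ _ (yma_zero_of_ge m α), ih (by omega), ell_succ hm α j,
      yma_pair hm α (by omega : j ≤ 2*m)]

private lemma ell_le_Gm {m : ℕ} (hm : 1 ≤ m) {α : ℝ} (hα0 : 1/2 ≤ α) (hα1 : α < 1) (j : ℕ) :
    ell m α j ≤ cdfG (yma m α) (2*m+2) j := by
  have hmr : (1:ℝ) ≤ (m:ℝ) := by exact_mod_cast hm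
  have hm0 : (m:ℝ) ≠ 0 := by linarith
  have hm1 : (m:ℝ)+1 ≠ 0 := by linarith
  by_cases hj : j ≤ 2*m+1
  · rw [Gm_eq_ell hm α j hj]
  · have hj' : 2*m+2 ≤ j := by omega
    rw [cdfG_tail _ _ _ hj', yma_total hm α]
    have hjr : (2*(m:ℝ)+2) ≤ (j:ℝ) := by
      have : ((2*m+2 : ℕ) : ℝ) ≤ (j:ℝ) := by exact_mod_cast hj'
      push_cast at this; linarith
    have hκ : 0 ≤ (1-α)/(m:ℝ) + α/((m:ℝ)+1) := by
      apply add_nonneg <;> apply div_nonneg <;> linarith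
    have h1 : ((1-α)/(m:ℝ) + α/((m:ℝ)+1)) * (2*(m:ℝ)+2)
        ≤ ((1-α)/(m:ℝ) + α/((m:ℝ)+1)) * (j:ℝ) :=
      mul_le_mul_of_nonneg_left hjr hκ
    have h2 : (if j % 2 = 1 then (1-α)/((m:ℝ)*((m:ℝ)+1)) else 0)
        ≤ (1-α)/((m:ℝ)*((m:ℝ)+1)) := by
      split
      · exact le_rfl
      · apply div_nonneg (by linarith); nlinarith
    have key : 1 - ((1-α)/(m:ℝ) + α/((m:ℝ)+1)) * (2*(m:ℝ)+2) + (1-α)/((m:ℝ)*((m:ℝ)+1)) + 1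
        = ((1-α) - 2*(1-α)*((m:ℝ)+1))/((m:ℝ)*((m:ℝ)+1)) := by
      field_simp
      ring
    have h3 : ((1-α) - 2*(1-α)*((m:ℝ)+1))/((m:ℝ)*((m:ℝ)+1)) ≤ 0 := by
      apply div_nonpos_of_nonpos_of_nonneg
      · nlinarith
      · nlinarith
    unfold ell
    linarith

noncomputable def ystar (m : ℕ) (b c : ℝ) : ℕ → ℝ := fun i =>
  (1 - (b-c)/(m:ℝ)) * delta 0 i + c * uo (m+1) i + ((b - c*((m:ℝ)+1))/(m:ℝ)) * ue m i

private lemma delta_pos : delta 0 0 = 1 := by simp [delta]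
private lemma delta_zero {j : ℕ} (h : j ≠ 0) : delta 0 j = 0 := by simp [delta, h]
private lemma uo_pos (m : ℕ) {i : ℕ} (h : i % 2 = 1) (h2 : i < 2*m) :
    uo m i = 1/(m:ℝ) := by
  show (if Odd i ∧ i < 2*m then (1:ℝ)/m else 0) = 1/(m:ℝ)
  rw [if_pos ⟨Nat.odd_iff.mpr h, h2⟩]
private lemma uo_zero (m : ℕ) {i : ℕ} (h : ¬ (i % 2 = 1 ∧ i < 2*m)) :
    uo m i = 0 := by
  show (if Odd i ∧ i < 2*m then (1:ℝ)/m else 0) = 0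
  rw [if_neg (fun hh => h ⟨Nat.odd_iff.mp hh.1, hh.2⟩)]
private lemma ue_pos (m : ℕ) {i : ℕ} (h : i % 2 = 0) (h2 : i ≤ 2*m) :
    ue m i = 1/((m:ℝ)+1) := by
  show (if Even i ∧ i ≤ 2*m then (1:ℝ)/((m:ℝ)+1) else 0) = 1/((m:ℝ)+1)
  rw [if_pos ⟨Nat.even_iff.mpr h, h2⟩]
private lemma ue_zero (m : ℕ) {i : ℕ} (h : ¬ (i % 2 = 0 ∧ i ≤ 2*m)) :
    ue m i = 0 := by
  show (if Even i ∧ i ≤ 2*m then (1:ℝ)/((m:ℝ)+1) else 0) = 0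
  rw [if_neg (fun hh => h ⟨Nat.even_iff.mp hh.1, hh.2⟩)]

private lemma Yv0 {m : ℕ} (hm : 1 ≤ m) (b c : ℝ) :
    ystar m b c 0 = (1 - (b-c)/(m:ℝ)) + (b - c*((m:ℝ)+1))/((m:ℝ)*((m:ℝ)+1)) := by
  have hmr : (1:ℝ) ≤ (m:ℝ) := by exact_mod_cast hm
  have hm0 : (m:ℝ) ≠ 0 := by linarith
  have hm1 : (m:ℝ)+1 ≠ 0 := by linarith
  unfold ystar
  rw [delta_pos, uo_zero (m+1) (by omega), ue_pos m rfl (by omega)]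
  field_simp
  try ring

private lemma YvOdd {m : ℕ} (hm : 1 ≤ m) (b c : ℝ) {j : ℕ} (hodd : j % 2 = 1)
    (hj : j ≤ 2*m+1) : ystar m b c j = c/((m:ℝ)+1) := by
  have hmr : (1:ℝ) ≤ (m:ℝ) := by exact_mod_cast hm
  unfold ystar
  rw [delta_zero (by omega), uo_pos (m+1) hodd (by omega), ue_zero m (by omega)]
  push_cast
  ring

private lemma YvEven {m : ℕ} (hm : 1 ≤ m) (b c : ℝ) {j : ℕ} (heven : j % 2 = 0) (hj1 : 1 ≤ j)
    (hj : j ≤ 2*m) : ystar m b c j = (b - c*((m:ℝ)+1))/((m:ℝ)*((m:ℝ)+1)) := by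
  have hmr : (1:ℝ) ≤ (m:ℝ) := by exact_mod_cast hm
  have hm0 : (m:ℝ) ≠ 0 := by linarith
  have hm1 : (m:ℝ)+1 ≠ 0 := by linarith
  unfold ystar
  rw [delta_zero (by omega), uo_zero (m+1) (by omega), ue_pos m heven hj]
  field_simp
  try ring

private lemma YvBig (m : ℕ) (b c : ℝ) {j : ℕ} (hj : 2*m+2 ≤ j) :
    ystar m b c j = 0 := by
  unfold ystar
  rw [delta_zero (by omega), uo_zero (m+1) (by omega), ue_zero m (by omega)]
  ring

private lemma Yv_nonneg {m : ℕ} (hm : 1 ≤ m) {b c : ℝ} (hb0 : 0 < b) (hb1 : b ≤ (m:ℝ))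
    (hc0 : 0 < c) (hc1 : c ≤ b/((m:ℝ)+1)) (i : ℕ) : 0 ≤ ystar m b c i := by
  have hmr : (1:ℝ) ≤ (m:ℝ) := by exact_mod_cast hm
  have hcb : c*((m:ℝ)+1) ≤ b := (le_div_iff₀ (by linarith)).mp hc1
  have hd : (0:ℝ) ≤ delta 0 i := by unfold delta; split <;> norm_num
  have huo : (0:ℝ) ≤ uo (m+1) i := by
    unfold uo; split
    · positivity
    · exact le_rfl
  have hue : (0:ℝ) ≤ ue m i := by
    unfold ue; split
    · positivity
    · exact le_rfl
  unfold ystar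
  have h1 : 0 ≤ 1 - (b-c)/(m:ℝ) := by
    rw [sub_nonneg, div_le_one (by linarith)]
    linarith
  have h2 : 0 ≤ (b - c*((m:ℝ)+1))/(m:ℝ) := by
    apply div_nonneg (by linarith) (by linarith)
  have := mul_nonneg h1 hd
  have := mul_nonneg hc0.le huo
  have := mul_nonneg h2 hue
  linarith


private lemma sumlin (n : ℕ) (A B : ℝ) :
    ∑ k ∈ Finset.range (n+1), (A * k + B) = A * (n*(n+1)/2) + (n+1) * B := by
  induction n with
  | zero => simp
  | succ n ih =>
    rw [Finset.sum_range_succ, ih]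
    push_cast
    ring


private lemma Ypair {m : ℕ} (hm : 1 ≤ m) (b c : ℝ) {j : ℕ} (hj1 : 1 ≤ j) (hj : j ≤ 2*m) :
    ystar m b c j + ystar m b c (j+1) = (b-c)/((m:ℝ)*((m:ℝ)+1)) := by
  have hmr : (1:ℝ) ≤ (m:ℝ) := by exact_mod_cast hm
  have hm0 : (m:ℝ) ≠ 0 := by linarith
  have hm1 : (m:ℝ)+1 ≠ 0 := by linarith
  by_cases h : j % 2 = 1
  · rw [YvOdd hm b c h (by omega), YvEven hm b c (by omega) (by omega) (by omega)]
    field_simp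
    ring
  · rw [YvEven hm b c (by omega) hj1 hj, YvOdd hm b c (by omega) (by omega)]
    field_simp
    ring

private lemma Ytotal {m : ℕ} (hm : 1 ≤ m) (b c : ℝ) :
    ∑ i ∈ Finset.range (2*m+2), ystar m b c i = 1 := by
  have hmr : (1:ℝ) ≤ (m:ℝ) := by exact_mod_cast hm
  have hm0 : (m:ℝ) ≠ 0 := by linarith
  have hm1 : (m:ℝ)+1 ≠ 0 := by linarith
  have h : 2*m+2 = 2*(m+1) := by ring
  rw [h, pairsum, Finset.sum_range_succ']
  have hc : ∀ k ∈ Finset.range m,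
      ystar m b c (2*(k+1)) + ystar m b c (2*(k+1)+1) = (b-c)/((m:ℝ)*((m:ℝ)+1)) := by
    intro k hk
    simp only [Finset.mem_range] at hk
    exact Ypair hm b c (by omega) (by omega)
  rw [Finset.sum_congr rfl hc, Finset.sum_const, Finset.card_range, Yv0 hm b c,
    YvOdd hm b c (j := 1) (by omega) (by omega)]
  simp only [nsmul_eq_mul]
  field_simp
  ring

private lemma Ymean {m : ℕ} (hm : 1 ≤ m) (b c : ℝ) :
    ∑ i ∈ Finset.range (2*m+2), (i:ℝ) * ystar m b c i = b := by
  have hmr : (1:ℝ) ≤ (m:ℝ) := by exact_mod_cast hm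
  have hm0 : (m:ℝ) ≠ 0 := by linarith
  have hm1 : (m:ℝ)+1 ≠ 0 := by linarith
  have h : 2*m+2 = 2*(m+1) := by ring
  rw [h, pairsum]
  have hc : ∀ k ∈ Finset.range (m+1),
      ((2*k : ℕ):ℝ) * ystar m b c (2*k) + ((2*k+1 : ℕ):ℝ) * ystar m b c (2*k+1)
      = (2*((b - c*((m:ℝ)+1))/((m:ℝ)*((m:ℝ)+1)) + c/((m:ℝ)+1))) * k + c/((m:ℝ)+1) := by
    intro k hk
    simp only [Finset.mem_range] at hk
    rw [YvOdd hm b c (j := 2*k+1) (by omega) (by omega)]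
    by_cases hk0 : k = 0
    · subst hk0
      norm_num
    · rw [YvEven hm b c (j := 2*k) (by omega) (by omega) (by omega)]
      push_cast
      ring
  rw [Finset.sum_congr rfl hc, sumlin]
  push_cast
  field_simp
  ring


private lemma Yodd_tsum {m : ℕ} (hm : 1 ≤ m) (b c : ℝ) :
    (∑' i : ℕ, ystar m b c (2*i+1)) = c := by
  have hmr : (1:ℝ) ≤ (m:ℝ) := by exact_mod_cast hm
  have hm1 : (m:ℝ)+1 ≠ 0 := by linarith
  rw [tsum_eq_sum (s := Finset.range (m+1)) (fun i hi => by
    simp only [Finset.mem_range] at hi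
    exact YvBig m b c (by omega))]
  have hc : ∀ i ∈ Finset.range (m+1), ystar m b c (2*i+1) = c/((m:ℝ)+1) := by
    intro i hi
    simp only [Finset.mem_range] at hi
    exact YvOdd hm b c (j := 2*i+1) (by omega) (by omega)
  rw [Finset.sum_congr rfl hc, Finset.sum_const, Finset.card_range, nsmul_eq_mul]
  push_cast
  field_simp

private lemma cdfG_abs_le (f : ℕ → ℝ) (N : ℕ) (hf0 : ∀ i, 0 ≤ f i)
    (hft : ∑ i ∈ Finset.range N, f i = 1) (j : ℕ) : |cdfG f N j| ≤ 1 := by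
  unfold cdfG
  rw [abs_le]
  have k1 : (0:ℝ) ≤ ∑ i ∈ Finset.range N, (if j < i then f i else 0) :=
    Finset.sum_nonneg (fun i _ => by split; exacts [hf0 i, le_rfl])
  have k2 : (0:ℝ) ≤ ∑ i ∈ Finset.range N, (if i < j then f i else 0) :=
    Finset.sum_nonneg (fun i _ => by split; exacts [hf0 i, le_rfl])
  have k3 : (∑ i ∈ Finset.range N, (if j < i then f i else 0)) ≤ 1 := by
    rw [← hft]
    exact Finset.sum_le_sum (fun i _ => by split; exacts [le_rfl, hf0 i])
  have k4 : (∑ i ∈ Finset.range N, (if i < j then f i else 0)) ≤ 1 := by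
    rw [← hft]
    exact Finset.sum_le_sum (fun i _ => by split; exacts [le_rfl, hf0 i])
  constructor <;> linarith

private lemma Yg_le {m : ℕ} (hm : 1 ≤ m) {b c : ℝ} (hb0 : 0 < b) (hb1 : b ≤ (m:ℝ))
    (hc0 : 0 < c) (hc1 : c ≤ b/((m:ℝ)+1)) (j : ℕ) :
    -(cdfG (ystar m b c) (2*m+2) j)
      ≤ (2*(1 - (b-c)/(m:ℝ)) - 1 + (b - c*((m:ℝ)+1))/((m:ℝ)*((m:ℝ)+1)))
        + ((b-c)/((m:ℝ)*((m:ℝ)+1))) * j := by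
  have hmr : (1:ℝ) ≤ (m:ℝ) := by exact_mod_cast hm
  have hm0 : (m:ℝ) ≠ 0 := by linarith
  have hm1 : (m:ℝ)+1 ≠ 0 := by linarith
  have hcb : c*((m:ℝ)+1) ≤ b := (le_div_iff₀ (by linarith)).mp hc1
  have hBig : ∀ i, 2*m+2 ≤ i → ystar m b c i = 0 := fun i hi => YvBig m b c hi
  set A := (2*(1 - (b-c)/(m:ℝ)) - 1 + (b - c*((m:ℝ)+1))/((m:ℝ)*((m:ℝ)+1))) with hA
  set B := ((b-c)/((m:ℝ)*((m:ℝ)+1))) with hB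
  have hg0 : cdfG (ystar m b c) (2*m+2) 0 = 1 - ystar m b c 0 := by
    rw [cdfG_zero _ _ (by omega), Ytotal hm b c]
  have heq : ∀ i, 1 ≤ i → (i ≤ 2*m+1 → -(cdfG (ystar m b c) (2*m+2) i) = A + B * i) := by
    intro i hi1
    induction i, hi1 using Nat.le_induction with
    | base =>
      intro _
      have : (0:ℕ) + 1 = 1 := rfl
      rw [← this, cdfG_succ _ _ _ hBig, hg0, Yv0 hm b c,
        YvOdd hm b c (j := 1) (by omega) (by omega), hA, hB]
      have hM : (m:ℝ)*((m:ℝ)+1) ≠ 0 := by positivity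
      push_cast
      field_simp
      ring
    | succ n hn ih =>
      intro h2
      rw [cdfG_succ _ _ _ hBig, Ypair hm b c hn (by omega)]
      have := ih (by omega)
      push_cast
      push_cast at this
      rw [hB]
      rw [hB] at this
      linarith
  by_cases hj0 : j = 0
  · subst hj0
    rw [hg0, Yv0 hm b c]
    have hw0 : 0 ≤ 1 - (b-c)/(m:ℝ) := by
      rw [sub_nonneg, div_le_one (by linarith)]
      linarith
    push_cast
    rw [hA]
    linarith
  · by_cases hj : j ≤ 2*m+1
    · rw [heq j (by omega) hj]
    · have hj' : 2*m+2 ≤ j := by omega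
      rw [cdfG_tail _ _ _ hj', Ytotal hm b c, neg_neg]
      have hBpos : 0 ≤ B := by
        rw [hB]
        apply div_nonneg (by nlinarith) (by nlinarith)
      have hwe : 0 ≤ (b - c*((m:ℝ)+1))/((m:ℝ)*((m:ℝ)+1)) := by
        apply div_nonneg (by linarith) (by nlinarith)
      have hkey : A + B * (2*(m:ℝ)+2) = 1 + (b - c*((m:ℝ)+1))/((m:ℝ)*((m:ℝ)+1)) := by
        rw [hA, hB]
        field_simp
        ring
      have hjr : (2*(m:ℝ)+2) ≤ (j:ℝ) := by
        have : ((2*m+2 : ℕ):ℝ) ≤ (j:ℝ) := by exact_mod_cast hj'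
        push_cast at this
        linarith
      have hstep : B * (2*(m:ℝ)+2) ≤ B * (j:ℝ) := mul_le_mul_of_nonneg_left hjr hBpos
      clear_value A B
      linarith

/-- the value and optimal strategies of the constrained General
Lotto game for 1/2 ≤ α < 1. -/
theorem stmt12 (m : ℕ) (hm : 1 ≤ m) (α b c : ℝ)
    (hα0 : 1/2 ≤ α) (hα1 : α < 1) (hb0 : 0 < b) (hb1 : b ≤ (m:ℝ))
    (hc0 : 0 < c) (hc1 : c ≤ b/((m:ℝ)+1))
    (v : ℝ) (hv : v = 1 - (1-α)*b/(m:ℝ) - α*b/((m:ℝ)+1) + (1-α)*c/((m:ℝ)*((m:ℝ)+1))) :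
    (∀ q : ℕ → ℝ, IsPMF q → HasMean q b → c ≤ (∑' i : ℕ, q (2*i+1)) →
      v ≤ Hpay (yma m α) q) ∧
    (IsPMF (fun i => (1 - (b-c)/(m:ℝ)) * delta 0 i + c * uo (m+1) i
        + ((b - c*((m:ℝ)+1))/(m:ℝ)) * ue m i) ∧
     HasMean (fun i => (1 - (b-c)/(m:ℝ)) * delta 0 i + c * uo (m+1) i
        + ((b - c*((m:ℝ)+1))/(m:ℝ)) * ue m i) b ∧
     (∑' i : ℕ, ((1 - (b-c)/(m:ℝ)) * delta 0 (2*i+1) + c * uo (m+1) (2*i+1)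
        + ((b - c*((m:ℝ)+1))/(m:ℝ)) * ue m (2*i+1))) = c ∧
     (∀ p : ℕ → ℝ, IsPMF p → HasMean p ((m:ℝ)+α) →
        Hpay p (fun i => (1 - (b-c)/(m:ℝ)) * delta 0 i + c * uo (m+1) i
          + ((b - c*((m:ℝ)+1))/(m:ℝ)) * ue m i) ≤ v)) := by
  have hmr : (1:ℝ) ≤ (m:ℝ) := by exact_mod_cast hm
  have hm0 : (m:ℝ) ≠ 0 := by linarith
  have hm1 : (m:ℝ)+1 ≠ 0 := by linarith
  have hMne : (m:ℝ)*((m:ℝ)+1) ≠ 0 := by positivity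
  constructor
  · -- part (i): lower bound for the attacker strategy yma
    rintro q ⟨hq0, hq1⟩ ⟨hqm, hqb⟩ hodd
    have hqs : Summable q := summable_of_pmf hq1
    have hY0 : ∀ i, 0 ≤ yma m α i := yma_nonneg hm hα0 hα1
    have hYN : ∀ i, 2*m+2 ≤ i → yma m α i = 0 := yma_zero_of_ge m α
    rw [Hpay_flip, Hpay_decomp q (yma m α) (2*m+2) hq0 hqs hY0 hYN, ← tsum_neg]
    have e : ∀ i : ℕ, -(q i * ((∑ j ∈ Finset.range (2*m+2), if j < i then yma m α j else 0)
        - (∑ j ∈ Finset.range (2*m+2), if i < j then yma m α j else 0)))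
        = q i * cdfG (yma m α) (2*m+2) i := by
      intro i; unfold cdfG; ring
    rw [tsum_congr e]
    have hG1 : ∀ i, |cdfG (yma m α) (2*m+2) i| ≤ 1 :=
      cdfG_abs_le _ _ hY0 (yma_total hm α)
    have hGsum : Summable (fun i => q i * cdfG (yma m α) (2*m+2) i) :=
      summable_mul_bounded hq0 hqs 1 hG1
    have hellsum_aux : Summable (fun i => if i % 2 = 1 then q i else 0) :=
      Summable.of_nonneg_of_le (fun i => by split; exacts [hq0 i, le_rfl])
        (fun i => by split; exacts [le_rfl, hq0 i]) hqs
    have hdecomp_ell : (fun i => q i * ell m α i)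
        = fun i => (q i - ((1-α)/(m:ℝ) + α/((m:ℝ)+1)) * ((i:ℝ) * q i))
            + ((1-α)/((m:ℝ)*((m:ℝ)+1))) * (if i % 2 = 1 then q i else 0) := by
      funext i
      unfold ell
      split_ifs <;> ring
    have hellsum : Summable (fun i => q i * ell m α i) := by
      rw [hdecomp_ell]
      exact ((hqs.sub (hqm.mul_left _)).add (hellsum_aux.mul_left _))
    have hle : (∑' i, q i * ell m α i) ≤ ∑' i, q i * cdfG (yma m α) (2*m+2) i :=
      Summable.tsum_le_tsum (fun i => mul_le_mul_of_nonneg_left (ell_le_Gm hm hα0 hα1 i) (hq0 i))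
        hellsum hGsum
    have hoddeq : (∑' i, (if i % 2 = 1 then q i else 0)) = ∑' i, q (2*i+1) := by
      have hinj : Function.Injective (fun i : ℕ => 2*i+1) := by
        intro a b h
        have h' : 2*a+1 = 2*b+1 := h
        omega
      have hsupp : Function.support (fun j => if j % 2 = 1 then q j else 0)
          ⊆ Set.range (fun i : ℕ => 2*i+1) := by
        intro j hj
        by_cases h : j % 2 = 1
        · exact ⟨j/2, by show 2*(j/2)+1 = j; omega⟩
        · simp only [Function.mem_support, if_neg h] at hj
          exact absurd rfl hj
      have heq2 := hinj.tsum_eq (f := fun j => if j % 2 = 1 then q j else 0) hsupp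
      rw [← heq2]
      apply tsum_congr
      intro i
      show (if (2*i+1) % 2 = 1 then q (2*i+1) else 0) = q (2*i+1)
      rw [if_pos (by omega : (2*i+1) % 2 = 1)]
    have hval : (∑' i, q i * ell m α i)
        = 1 - ((1-α)/(m:ℝ) + α/((m:ℝ)+1)) * b
          + ((1-α)/((m:ℝ)*((m:ℝ)+1))) * (∑' i, q (2*i+1)) := by
      rw [hdecomp_ell, Summable.tsum_add (hqs.sub (hqm.mul_left _)) (hellsum_aux.mul_left _),
        Summable.tsum_sub hqs (hqm.mul_left _), Summable.tsum_mul_left _ hqm,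
        Summable.tsum_mul_left _ hellsum_aux, hq1, hqb, hoddeq]
    have hd0 : 0 ≤ (1-α)/((m:ℝ)*((m:ℝ)+1)) := by
      apply div_nonneg (by linarith) (by positivity)
    have hvle : v ≤ ∑' i, q i * ell m α i := by
      rw [hval, hv]
      have hstep := mul_le_mul_of_nonneg_left hodd hd0
      have hveq : 1 - (1-α)*b/(m:ℝ) - α*b/((m:ℝ)+1) + (1-α)*c/((m:ℝ)*((m:ℝ)+1))
          = 1 - ((1-α)/(m:ℝ) + α/((m:ℝ)+1)) * b + ((1-α)/((m:ℝ)*((m:ℝ)+1))) * c := by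
        ring
      linarith
    linarith
  · -- part (ii)
    have hYne : ∀ i, 0 ≤ ystar m b c i := Yv_nonneg hm hb0 hb1 hc0 hc1
    have hYBig : ∀ i, 2*m+2 ≤ i → ystar m b c i = 0 := fun i hi => YvBig m b c hi
    refine ⟨⟨hYne, ?_⟩, ⟨?_, ?_⟩, ?_, ?_⟩
    · -- total mass
      show (∑' i, ystar m b c i) = 1
      rw [tsum_eq_sum (s := Finset.range (2*m+2)) (fun i hi =>
        hYBig i (by simpa using hi))]
      exact Ytotal hm b c
    · -- mean summable
      show Summable (fun i : ℕ => (i:ℝ) * ystar m b c i)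
      apply summable_of_ne_finset_zero (s := Finset.range (2*m+2))
      intro i hi
      rw [hYBig i (by simpa using hi), mul_zero]
    · -- mean value
      show (∑' i : ℕ, (i:ℝ) * ystar m b c i) = b
      rw [tsum_eq_sum (s := Finset.range (2*m+2)) (fun i hi => by
        rw [hYBig i (by simpa using hi), mul_zero])]
      exact Ymean hm b c
    · -- odd mass
      exact Yodd_tsum hm b c
    · -- upper bound against any p with mean m+α
      rintro p ⟨hp0, hp1⟩ ⟨hpm, hpb⟩
      have hps : Summable p := summable_of_pmf hp1
      show Hpay p (ystar m b c) ≤ v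
      rw [Hpay_decomp p (ystar m b c) (2*m+2) hp0 hps hYne hYBig]
      have e : ∀ i : ℕ, p i * ((∑ j ∈ Finset.range (2*m+2), if j < i then ystar m b c j else 0)
          - (∑ j ∈ Finset.range (2*m+2), if i < j then ystar m b c j else 0))
          = p i * (-(cdfG (ystar m b c) (2*m+2) i)) := by
        intro i; unfold cdfG; ring
      rw [tsum_congr e]
      have hub : ∀ i : ℕ, -(cdfG (ystar m b c) (2*m+2) i)
          ≤ (2*(1 - (b-c)/(m:ℝ)) - 1 + (b - c*((m:ℝ)+1))/((m:ℝ)*((m:ℝ)+1)))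
            + ((b-c)/((m:ℝ)*((m:ℝ)+1))) * i := Yg_le hm hb0 hb1 hc0 hc1
      have habs : ∀ i, |(-(cdfG (ystar m b c) (2*m+2) i))| ≤ 1 := fun i => by
        rw [abs_neg]; exact cdfG_abs_le _ _ hYne (Ytotal hm b c) i
      have hsum1 : Summable (fun i => p i * (-(cdfG (ystar m b c) (2*m+2) i))) :=
        summable_mul_bounded hp0 hps 1 habs
      have hrw : (fun i : ℕ => p i * ((2*(1 - (b-c)/(m:ℝ)) - 1
            + (b - c*((m:ℝ)+1))/((m:ℝ)*((m:ℝ)+1))) + ((b-c)/((m:ℝ)*((m:ℝ)+1))) * i))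
          = fun i : ℕ => (2*(1 - (b-c)/(m:ℝ)) - 1 + (b - c*((m:ℝ)+1))/((m:ℝ)*((m:ℝ)+1))) * p i
            + ((b-c)/((m:ℝ)*((m:ℝ)+1))) * ((i:ℝ) * p i) := by
        funext i; ring
      have hsum2 : Summable (fun i : ℕ => p i * ((2*(1 - (b-c)/(m:ℝ)) - 1
            + (b - c*((m:ℝ)+1))/((m:ℝ)*((m:ℝ)+1))) + ((b-c)/((m:ℝ)*((m:ℝ)+1))) * i)) := by
        rw [hrw]
        exact (hps.mul_left _).add (hpm.mul_left _)
      have hle := Summable.tsum_le_tsum (fun i => mul_le_mul_of_nonneg_left (hub i) (hp0 i)) hsum1 hsum2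
      have hval2 : (∑' i : ℕ, p i * ((2*(1 - (b-c)/(m:ℝ)) - 1
            + (b - c*((m:ℝ)+1))/((m:ℝ)*((m:ℝ)+1))) + ((b-c)/((m:ℝ)*((m:ℝ)+1))) * i))
          = (2*(1 - (b-c)/(m:ℝ)) - 1 + (b - c*((m:ℝ)+1))/((m:ℝ)*((m:ℝ)+1)))
            + ((b-c)/((m:ℝ)*((m:ℝ)+1))) * ((m:ℝ)+α) := by
        rw [hrw, Summable.tsum_add (hps.mul_left _) (hpm.mul_left _),
          Summable.tsum_mul_left _ hps, Summable.tsum_mul_left _ hpm, hp1, hpb]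
        ring
      have hfin : (2*(1 - (b-c)/(m:ℝ)) - 1 + (b - c*((m:ℝ)+1))/((m:ℝ)*((m:ℝ)+1)))
            + ((b-c)/((m:ℝ)*((m:ℝ)+1))) * ((m:ℝ)+α) = v := by
        rw [hv]
        field_simp
        ring
      linarith
end

section
/- Let m ≥ 1 be an integer and let q be a probability distribution on ℕ with finite mean b. Then H(u^o_m, q) ≥ 1 − b/m + q(2m+1)/m, and H(u^e_m, q) ≥ 1 − (1+b)/(m+1); in each of the two inequalities, equality holds if and only if q(i) = 0 for all i ≥ 2m+2. -/
open scoped BigOperators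

/- ### Auxiliary lemmas -/

lemma pmf_summable {q : ℕ → ℝ} (hq : IsPMF q) : Summable q := by
  by_contra hs
  obtain ⟨h0, h1⟩ := hq
  rw [tsum_eq_zero_of_not_summable hs] at h1
  norm_num at h1

lemma summable_ite' {q : ℕ → ℝ} (hq : Summable q) (h0 : ∀ i, 0 ≤ q i)
    (P : ℕ → Prop) [DecidablePred P] :
    Summable (fun j => if P j then q j else 0) := by
  refine Summable.of_nonneg_of_le (fun j => ?_) (fun j => ?_) hq
  · split <;> simp [h0]
  · split <;> simp [h0]

lemma summable_bdd {q w : ℕ → ℝ} (hq : Summable q) (h0 : ∀ i, 0 ≤ q i)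
    (C : ℝ) (hw : ∀ j, |w j| ≤ C) : Summable (fun j => w j * q j) := by
  refine Summable.of_abs (Summable.of_nonneg_of_le (fun j => abs_nonneg _)
    (fun j => ?_) (hq.mul_left C))
  rw [abs_mul, abs_of_nonneg (h0 j)]
  exact mul_le_mul_of_nonneg_right (hw j) (h0 j)

lemma hpay_eq {p q : ℕ → ℝ} {s : Finset ℕ} (hp : ∀ i ∉ s, p i = 0)
    (hp0 : ∀ i, 0 ≤ p i) (hq : IsPMF q) :
    Hpay p q = ∑ i ∈ s, p i * (2 * (∑ j ∈ Finset.range i, q j) + q i - 1) := by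
  have hqs : Summable q := pmf_summable hq
  have hq0 := hq.1
  have hps : Summable p := summable_of_ne_finset_zero hp
  have hg : Summable (fun ij : ℕ × ℕ => p ij.1 * q ij.2) :=
    hps.mul_of_nonneg hqs (fun i => hp0 i) (fun j => hq0 j)
  have hnng : ∀ ij : ℕ × ℕ, 0 ≤ p ij.1 * q ij.2 := fun ij => mul_nonneg (hp0 _) (hq0 _)
  have hf1 : Summable (fun ij : ℕ × ℕ => if ij.2 < ij.1 then p ij.1 * q ij.2 else 0) := by
    refine Summable.of_nonneg_of_le (fun ij => ?_) (fun ij => ?_) hg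
    · split
      exacts [hnng ij, le_rfl]
    · split
      exacts [le_rfl, hnng ij]
  have hf2 : Summable (fun ij : ℕ × ℕ => if ij.1 < ij.2 then p ij.1 * q ij.2 else 0) := by
    refine Summable.of_nonneg_of_le (fun ij => ?_) (fun ij => ?_) hg
    · split
      exacts [hnng ij, le_rfl]
    · split
      exacts [le_rfl, hnng ij]
  have hA : ∀ i : ℕ, (∑' j : ℕ, if j < i then p i * q j else 0)
      = p i * ∑ j ∈ Finset.range i, q j := by
    intro i
    have : (fun j : ℕ => if j < i then p i * q j else 0)
        = fun j => p i * (if j < i then q j else 0) := by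
      funext j; split <;> simp
    rw [this, tsum_mul_left]
    congr 1
    rw [tsum_eq_sum (s := Finset.range i) (fun j hj => by
      rw [if_neg]; simpa using hj)]
    exact Finset.sum_congr rfl (fun j hj => by rw [if_pos (Finset.mem_range.mp hj)])
  have hB : ∀ i : ℕ, (∑' j : ℕ, if i < j then p i * q j else 0)
      = p i * (1 - (∑ j ∈ Finset.range i, q j) - q i) := by
    intro i
    have h1 : (fun j : ℕ => if i < j then p i * q j else 0)
        = fun j => p i * (if i < j then q j else 0) := by
      funext j; split <;> simp
    rw [h1, tsum_mul_left]
    congr 1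
    have hsplit : ∀ j : ℕ, q j = (if j < i then q j else 0) + (if j = i then q i else 0)
        + (if i < j then q j else 0) := by
      intro j
      rcases lt_trichotomy j i with h | h | h
      · simp [h, Nat.lt_asymm h, h.ne]
      · simp [h]
      · simp [h, Nat.lt_asymm h, h.ne']
    have s1 : Summable (fun j : ℕ => if j < i then q j else 0) := summable_ite' hqs hq0 _
    have s2 : Summable (fun j : ℕ => if j = i then q i else 0) :=
      summable_of_ne_finset_zero (s := {i}) (fun j hj => by
        rw [if_neg]; simpa using hj)
    have s3 : Summable (fun j : ℕ => if i < j then q j else 0) := summable_ite' hqs hq0 _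
    have := hq.2
    rw [tsum_congr hsplit, Summable.tsum_add (s1.add s2) s3, Summable.tsum_add s1 s2, tsum_ite_eq] at this
    have hAi : (∑' j : ℕ, if j < i then q j else 0) = ∑ j ∈ Finset.range i, q j := by
      rw [tsum_eq_sum (s := Finset.range i) (fun j hj => by
        rw [if_neg]; simpa using hj)]
      exact Finset.sum_congr rfl (fun j hj => by rw [if_pos (Finset.mem_range.mp hj)])
    rw [hAi] at this
    linarith
  have e1 : (∑' ij : ℕ × ℕ, if ij.2 < ij.1 then p ij.1 * q ij.2 else 0)
      = ∑ i ∈ s, p i * ∑ j ∈ Finset.range i, q j := by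
    rw [Summable.tsum_prod hf1]
    rw [tsum_eq_sum (s := s) (fun i hi => by
      have : ∀ j : ℕ, (if j < i then p i * q j else 0) = 0 := fun j => by
        rw [hp i hi]; split <;> simp
      simp only [this]; exact tsum_zero)]
    exact Finset.sum_congr rfl (fun i _ => hA i)
  have e2 : (∑' ij : ℕ × ℕ, if ij.1 < ij.2 then p ij.1 * q ij.2 else 0)
      = ∑ i ∈ s, p i * (1 - (∑ j ∈ Finset.range i, q j) - q i) := by
    rw [Summable.tsum_prod hf2]
    rw [tsum_eq_sum (s := s) (fun i hi => by
      have : ∀ j : ℕ, (if i < j then p i * q j else 0) = 0 := fun j => by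
        rw [hp i hi]; split <;> simp
      simp only [this]; exact tsum_zero)]
    exact Finset.sum_congr rfl (fun i _ => hB i)
  rw [Hpay, e1, e2, ← Finset.sum_sub_distrib]
  exact Finset.sum_congr rfl (fun i _ => by ring)

lemma sum_formula {q : ℕ → ℝ} (hq : IsPMF q) (S : Finset ℕ) :
    ∑ i ∈ S, (2 * (∑ j ∈ Finset.range i, q j) + q i - 1)
    = ∑' j : ℕ, (2 * ((S.filter (fun i => j < i)).card : ℝ)
        + (if j ∈ S then 1 else 0) - S.card) * q j := by
  have hqs : Summable q := pmf_summable hq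
  have hq0 := hq.1
  have hc : ∀ j : ℕ, ((S.filter (fun i => j < i)).card : ℝ) ≤ S.card := by
    intro j; exact_mod_cast Nat.cast_le.mpr (Finset.card_filter_le _ _)
  have hc0 : ∀ j : ℕ, (0:ℝ) ≤ ((S.filter (fun i => j < i)).card : ℝ) := fun j => by positivity
  have s1 : Summable (fun j : ℕ => ((S.filter (fun i => j < i)).card : ℝ) * q j) :=
    summable_bdd hqs hq0 S.card (fun j => by rw [abs_of_nonneg (hc0 j)]; exact hc j)
  have s2 : Summable (fun j : ℕ => (if j ∈ S then (1:ℝ) else 0) * q j) :=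
    summable_bdd hqs hq0 1 (fun j => by split <;> simp)
  have s3 : Summable (fun j : ℕ => (S.card : ℝ) * q j) := hqs.mul_left _
  have p1 : ∑ i ∈ S, (∑ j ∈ Finset.range i, q j)
      = ∑' j : ℕ, ((S.filter (fun i => j < i)).card : ℝ) * q j := by
    have hinner : ∀ i : ℕ, (∑ j ∈ Finset.range i, q j) = ∑' j : ℕ, (if j < i then q j else 0) := by
      intro i
      rw [tsum_eq_sum (s := Finset.range i) (fun j hj => by rw [if_neg]; simpa using hj)]
      exact (Finset.sum_congr rfl (fun j hj => by rw [if_pos (Finset.mem_range.mp hj)])).symm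
    calc ∑ i ∈ S, (∑ j ∈ Finset.range i, q j)
        = ∑ i ∈ S, ∑' j : ℕ, (if j < i then q j else 0) :=
          Finset.sum_congr rfl (fun i _ => hinner i)
      _ = ∑' j : ℕ, ∑ i ∈ S, (if j < i then q j else 0) :=
          (Summable.tsum_finsetSum (fun i _ => summable_ite' hqs hq0 _)).symm
      _ = ∑' j : ℕ, ((S.filter (fun i => j < i)).card : ℝ) * q j := by
          refine tsum_congr (fun j => ?_)
          rw [← Finset.sum_filter, Finset.sum_const, nsmul_eq_mul]
  have p2 : ∑ i ∈ S, q i = ∑' j : ℕ, (if j ∈ S then (1:ℝ) else 0) * q j := by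
    rw [tsum_eq_sum (s := S) (fun j hj => by rw [if_neg hj, zero_mul])]
    exact (Finset.sum_congr rfl (fun j hj => by rw [if_pos hj, one_mul])).symm
  have p3 : (S.card : ℝ) = ∑' j : ℕ, (S.card : ℝ) * q j := by
    rw [tsum_mul_left, hq.2, mul_one]
  calc ∑ i ∈ S, (2 * (∑ j ∈ Finset.range i, q j) + q i - 1)
      = 2 * (∑ i ∈ S, (∑ j ∈ Finset.range i, q j)) + (∑ i ∈ S, q i) - S.card := by
        rw [Finset.sum_sub_distrib, Finset.sum_add_distrib, ← Finset.mul_sum]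
        simp
    _ = ∑' j : ℕ, (2 * (((S.filter (fun i => j < i)).card : ℝ) * q j)
          + (if j ∈ S then (1:ℝ) else 0) * q j - (S.card : ℝ) * q j) := by
        rw [Summable.tsum_sub ((s1.mul_left 2).add s2) s3, Summable.tsum_add (s1.mul_left 2) s2, tsum_mul_left,
          ← p1, ← p2, ← p3]
    _ = _ := tsum_congr (fun j => by ring)

lemma diff_eq {q : ℕ → ℝ} {b : ℝ} (hq : IsPMF q) (hmean : HasMean q b)
    (S : Finset ℕ) (K r : ℝ) (t : ℕ) :
    (∑ i ∈ S, (2 * (∑ j ∈ Finset.range i, q j) + q i - 1)) - (K - b + r * q t)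
    = ∑' j : ℕ, (2 * ((S.filter (fun i => j < i)).card : ℝ)
        + (if j ∈ S then 1 else 0) - S.card - K + j - (if j = t then r else 0)) * q j := by
  have hqs : Summable q := pmf_summable hq
  have hq0 := hq.1
  set w : ℕ → ℝ := fun j => 2 * ((S.filter (fun i => j < i)).card : ℝ)
      + (if j ∈ S then 1 else 0) - S.card - K - (if j = t then r else 0) with hw
  have hwb : ∀ j, |w j| ≤ 2 * S.card + 1 + S.card + |K| + |r| := by
    intro j
    have hc : ((S.filter (fun i => j < i)).card : ℝ) ≤ S.card :=
      Nat.cast_le.mpr (Finset.card_filter_le _ _)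
    have hc0 : (0:ℝ) ≤ ((S.filter (fun i => j < i)).card : ℝ) := by positivity
    have hx1 : (0:ℝ) ≤ (if j ∈ S then (1:ℝ) else 0) := by split <;> norm_num
    have hx2 : (if j ∈ S then (1:ℝ) else 0) ≤ 1 := by split <;> norm_num
    have hd1 : -|r| ≤ (if j = t then r else 0) := by
      split
      · exact neg_abs_le r
      · simp [abs_nonneg]
    have hd2 : (if j = t then r else 0) ≤ |r| := by
      split
      · exact le_abs_self r
      · simp [abs_nonneg]
    rw [abs_le]
    constructor <;> simp only [hw] <;>
      linarith [neg_abs_le K, le_abs_self K]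
  have sw : Summable (fun j => w j * q j) := summable_bdd hqs hq0 _ hwb
  have sj : Summable (fun j : ℕ => (j:ℝ) * q j) := hmean.1
  have key : ∑' j : ℕ, (2 * ((S.filter (fun i => j < i)).card : ℝ)
        + (if j ∈ S then 1 else 0) - S.card - K + j - (if j = t then r else 0)) * q j
      = (∑' j : ℕ, w j * q j) + ∑' j : ℕ, (j:ℝ) * q j := by
    rw [← Summable.tsum_add sw sj]
    exact tsum_congr (fun j => by simp only [hw]; ring)
  have sK : Summable (fun j : ℕ => K * q j) := hqs.mul_left _
  have sd : Summable (fun j : ℕ => (if j = t then r else 0) * q j) :=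
    summable_bdd hqs hq0 |r| (fun j => by split <;> simp [abs_nonneg])
  have sw2 : Summable (fun j : ℕ => (2 * ((S.filter (fun i => j < i)).card : ℝ)
      + (if j ∈ S then 1 else 0) - S.card) * q j) :=
    summable_bdd hqs hq0 (2 * S.card + 1 + S.card) (fun j => by
      have hc : ((S.filter (fun i => j < i)).card : ℝ) ≤ S.card :=
        Nat.cast_le.mpr (Finset.card_filter_le _ _)
      have hc0 : (0:ℝ) ≤ ((S.filter (fun i => j < i)).card : ℝ) := by positivity
      have hx1 : (0:ℝ) ≤ (if j ∈ S then (1:ℝ) else 0) := by split <;> norm_num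
      have hx2 : (if j ∈ S then (1:ℝ) else 0) ≤ 1 := by split <;> norm_num
      rw [abs_le]; constructor <;> linarith)
  have split_w : ∑' j : ℕ, w j * q j
      = (∑' j : ℕ, (2 * ((S.filter (fun i => j < i)).card : ℝ)
          + (if j ∈ S then 1 else 0) - S.card) * q j)
        - K - r * q t := by
    have e1 : ∑' j : ℕ, K * q j = K := by rw [tsum_mul_left, hq.2, mul_one]
    have e2 : ∑' j : ℕ, (if j = t then r else 0) * q j = r * q t := by
      have : ∀ j : ℕ, (if j = t then r else 0) * q j = (if j = t then r * q t else 0) := by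
        intro j; split
        · rename_i h; rw [h]
        · rw [zero_mul]
      rw [tsum_congr this, tsum_ite_eq]
    have e3 : (fun j : ℕ => w j * q j)
        = fun j : ℕ => ((2 * ((S.filter (fun i => j < i)).card : ℝ)
          + (if j ∈ S then 1 else 0) - S.card) * q j - K * q j
            - (if j = t then r else 0) * q j) := by
      funext j; simp only [hw]; ring
    rw [e3, Summable.tsum_sub (sw2.sub sK) sd, Summable.tsum_sub sw2 sK, e1, e2]
  rw [key, split_w, ← sum_formula hq S, hmean.2]
  ring

lemma card_odd_filter (m j : ℕ) :
    ((((Finset.range (2*m)).filter (fun i => Odd i)).filter (fun i => j < i)).card)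
      = m - (j+1)/2 := by
  have himg : (((Finset.range (2*m)).filter (fun i => Odd i)).filter (fun i => j < i))
      = (Finset.Ico ((j+1)/2) m).image (fun k => 2*k+1) := by
    ext i
    simp only [Finset.mem_filter, Finset.mem_range, Finset.mem_image, Finset.mem_Ico,
      Nat.odd_iff]
    constructor
    · rintro ⟨⟨hlt, hodd⟩, hj⟩
      exact ⟨i/2, by omega, by omega⟩
    · rintro ⟨k, ⟨h1, h2⟩, rfl⟩
      refine ⟨⟨by omega, by omega⟩, by omega⟩
  rw [himg, Finset.card_image_of_injective _ (fun a b h => by omega), Nat.card_Ico]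

lemma card_odd (m : ℕ) : (((Finset.range (2*m)).filter (fun i => Odd i)).card) = m := by
  have himg : ((Finset.range (2*m)).filter (fun i => Odd i))
      = (Finset.range m).image (fun k => 2*k+1) := by
    ext i
    simp only [Finset.mem_filter, Finset.mem_range, Finset.mem_image, Nat.odd_iff]
    constructor
    · rintro ⟨hlt, hodd⟩
      exact ⟨i/2, by omega, by omega⟩
    · rintro ⟨k, h1, rfl⟩
      exact ⟨by omega, by omega⟩
  rw [himg, Finset.card_image_of_injective _ (fun a b h => by omega), Finset.card_range]

lemma card_even_filter (m j : ℕ) :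
    ((((Finset.range (2*m+1)).filter (fun i => Even i)).filter (fun i => j < i)).card)
      = m - j/2 := by
  have himg : (((Finset.range (2*m+1)).filter (fun i => Even i)).filter (fun i => j < i))
      = (Finset.Ico (j/2+1) (m+1)).image (fun k => 2*k) := by
    ext i
    simp only [Finset.mem_filter, Finset.mem_range, Finset.mem_image, Finset.mem_Ico,
      Nat.even_iff]
    constructor
    · rintro ⟨⟨hlt, heven⟩, hj⟩
      exact ⟨i/2, by omega, by omega⟩
    · rintro ⟨k, ⟨h1, h2⟩, rfl⟩
      refine ⟨⟨by omega, by omega⟩, by omega⟩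
  rw [himg, Finset.card_image_of_injective _ (fun a b h => by omega), Nat.card_Ico]
  omega

lemma card_even (m : ℕ) : (((Finset.range (2*m+1)).filter (fun i => Even i)).card) = m + 1 := by
  have himg : ((Finset.range (2*m+1)).filter (fun i => Even i))
      = (Finset.range (m+1)).image (fun k => 2*k) := by
    ext i
    simp only [Finset.mem_filter, Finset.mem_range, Finset.mem_image, Nat.even_iff]
    constructor
    · rintro ⟨hlt, heven⟩
      exact ⟨i/2, by omega, by omega⟩
    · rintro ⟨k, h1, rfl⟩
      exact ⟨by omega, by omega⟩
  rw [himg, Finset.card_image_of_injective _ (fun a b h => by omega), Finset.card_range]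

lemma odd_coef (m j : ℕ) :
    2 * ((m - (j+1)/2 : ℕ) : ℝ) + (if Odd j ∧ j < 2*m then 1 else 0) - (m:ℝ) - (m:ℝ) + j
      - (if j = 2*m+1 then 1 else 0)
    = if j ≤ 2*m+1 then 0 else (j:ℝ) - 2*m := by
  rcases le_or_gt j (2*m+1) with h | h
  · rw [if_pos h]
    by_cases hodd : Odd j
    · have hj1 : j % 2 = 1 := Nat.odd_iff.mp hodd
      by_cases hlt : j < 2*m
      · rw [if_pos ⟨hodd, hlt⟩, if_neg (by omega)]
        have h2 : (j+1)/2 ≤ m := by omega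
        rw [Nat.cast_sub h2]
        have hval : 2 * ((j+1)/2) = j + 1 := by omega
        have hcast : ((2 * ((j+1)/2) : ℕ) : ℝ) = (j:ℝ) + 1 := by exact_mod_cast hval
        push_cast at hcast ⊢
        linarith
      · have hj : j = 2*m+1 := by omega
        subst hj
        rw [if_neg (fun hc => by omega), if_pos rfl]
        have hv : (2*m+1+1)/2 = m+1 := by omega
        rw [hv, Nat.sub_eq_zero_of_le (by omega)]
        push_cast; ring
    · have hj0 : j % 2 = 0 := Nat.even_iff.mp (Nat.not_odd_iff_even.mp hodd)
      rw [if_neg (fun hc => hodd hc.1), if_neg (by omega)]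
      have h2 : (j+1)/2 ≤ m := by omega
      rw [Nat.cast_sub h2]
      have hval : 2 * ((j+1)/2) = j := by omega
      have hcast : ((2 * ((j+1)/2) : ℕ) : ℝ) = (j:ℝ) := by exact_mod_cast hval
      push_cast at hcast ⊢
      linarith
  · rw [if_neg (by omega), if_neg (by rintro ⟨_, h2⟩; omega), if_neg (by omega),
      Nat.sub_eq_zero_of_le (by omega)]
    push_cast; ring

lemma even_coef (m j : ℕ) :
    2 * ((m - j/2 : ℕ) : ℝ) + (if Even j ∧ j ≤ 2*m then 1 else 0) - ((m:ℝ)+1) - (m:ℝ) + j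
      - (if j = 0 then (0:ℝ) else 0)
    = if j ≤ 2*m+1 then 0 else (j:ℝ) - (2*m+1) := by
  simp only [ite_self]
  rcases le_or_gt j (2*m+1) with h | h
  · rw [if_pos h]
    by_cases heven : Even j
    · have hj0 : j % 2 = 0 := Nat.even_iff.mp heven
      have hle : j ≤ 2*m := by omega
      rw [if_pos ⟨heven, hle⟩]
      have h2 : j/2 ≤ m := by omega
      rw [Nat.cast_sub h2]
      have hval : 2 * (j/2) = j := by omega
      have hcast : ((2 * (j/2) : ℕ) : ℝ) = (j:ℝ) := by exact_mod_cast hval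
      push_cast at hcast ⊢
      linarith
    · have hj1 : j % 2 = 1 := Nat.odd_iff.mp (Nat.not_even_iff_odd.mp heven)
      rw [if_neg (fun hc => heven hc.1)]
      have h2 : j/2 ≤ m := by omega
      rw [Nat.cast_sub h2]
      have hval : 2 * (j/2) = j - 1 := by omega
      have hcast : ((2 * (j/2) : ℕ) : ℝ) = (j:ℝ) - 1 := by
        have : ((2 * (j/2) : ℕ) : ℝ) = ((j - 1 : ℕ) : ℝ) := by exact_mod_cast hval
        rw [this, Nat.cast_sub (by omega)]; norm_num
      push_cast at hcast ⊢
      linarith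
  · rw [if_neg (show ¬(Even j ∧ j ≤ 2*m) from fun hc => absurd hc.2 (by omega)),
      if_neg (show ¬ j ≤ 2*m+1 by omega), Nat.sub_eq_zero_of_le (by omega)]
    push_cast; ring

/-- lower bounds on H(u^o_m, q) and H(u^e_m, q) for q with mean b,
with equality in each iff q vanishes on {2m+2, 2m+3, …}. -/
theorem stmt14 (m : ℕ) (hm : 1 ≤ m) (q : ℕ → ℝ) (b : ℝ)
    (hq : IsPMF q) (hmean : HasMean q b) :
    (1 - b/(m:ℝ) + q (2*m+1)/(m:ℝ) ≤ Hpay (uo m) q) ∧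
    (Hpay (uo m) q = 1 - b/(m:ℝ) + q (2*m+1)/(m:ℝ) ↔ ∀ i, 2*m+2 ≤ i → q i = 0) ∧
    (1 - (1+b)/((m:ℝ)+1) ≤ Hpay (ue m) q) ∧
    (Hpay (ue m) q = 1 - (1+b)/((m:ℝ)+1) ↔ ∀ i, 2*m+2 ≤ i → q i = 0) := by
  have hq0 := hq.1
  have hqs : Summable q := pmf_summable hq
  have hm' : (0:ℝ) < m := by exact_mod_cast hm
  have hm1' : (0:ℝ) < (m:ℝ) + 1 := by positivity
  -- ===== ODD CASE =====
  have hoA : Hpay (uo m) q = (1/(m:ℝ)) *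
      ∑ i ∈ (Finset.range (2*m)).filter (fun i => Odd i),
        (2 * (∑ j ∈ Finset.range i, q j) + q i - 1) := by
    rw [hpay_eq (s := (Finset.range (2*m)).filter (fun i => Odd i))
      (fun i hi => by
        rw [uo, if_neg]
        intro hc
        exact hi (Finset.mem_filter.mpr ⟨Finset.mem_range.mpr hc.2, hc.1⟩))
      (fun i => by rw [uo]; split <;> positivity) hq, Finset.mul_sum]
    refine Finset.sum_congr rfl (fun i hi => ?_)
    obtain ⟨hir, hio⟩ := Finset.mem_filter.mp hi
    rw [uo, if_pos ⟨hio, Finset.mem_range.mp hir⟩]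
  have hoSum : ∑ i ∈ (Finset.range (2*m)).filter (fun i => Odd i),
      (2 * (∑ j ∈ Finset.range i, q j) + q i - 1) = (m:ℝ) * Hpay (uo m) q := by
    rw [hoA]; field_simp
  have hoD := diff_eq hq hmean ((Finset.range (2*m)).filter (fun i => Odd i))
      (m:ℝ) 1 (2*m+1)
  have hocoef : ∀ j : ℕ,
      (2 * ((((Finset.range (2*m)).filter (fun i => Odd i)).filter (fun i => j < i)).card : ℝ)
        + (if j ∈ (Finset.range (2*m)).filter (fun i => Odd i) then 1 else 0)
        - (((Finset.range (2*m)).filter (fun i => Odd i)).card : ℝ) - (m:ℝ) + j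
        - (if j = 2*m+1 then 1 else 0)) * q j
      = (if j ≤ 2*m+1 then 0 else (j:ℝ) - 2*m) * q j := by
    intro j
    congr 1
    rw [card_odd_filter m j, card_odd m]
    rw [if_congr (show (j ∈ (Finset.range (2*m)).filter (fun i => Odd i)) ↔ Odd j ∧ j < 2*m by
      simp only [Finset.mem_filter, Finset.mem_range]; tauto) rfl rfl]
    exact odd_coef m j
  have hoD' : (m:ℝ) * Hpay (uo m) q - ((m:ℝ) - b + q (2*m+1))
      = ∑' j : ℕ, (if j ≤ 2*m+1 then 0 else (j:ℝ) - 2*m) * q j := by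
    rw [← hoSum]
    rw [show (m:ℝ) - b + q (2*m+1) = (m:ℝ) - b + 1 * q (2*m+1) by ring, hoD]
    exact tsum_congr hocoef
  have hoTnn : ∀ j : ℕ, 0 ≤ (if j ≤ 2*m+1 then 0 else (j:ℝ) - 2*m) * q j := by
    intro j
    rcases le_or_gt j (2*m+1) with h | h
    · rw [if_pos h, zero_mul]
    · rw [if_neg (by omega)]
      have : (2*(m:ℝ)+1) < j := by exact_mod_cast h
      exact mul_nonneg (by linarith) (hq0 j)
  have hoTle : ∀ j : ℕ, (if j ≤ 2*m+1 then 0 else (j:ℝ) - 2*m) * q j ≤ (j:ℝ) * q j := by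
    intro j
    rcases le_or_gt j (2*m+1) with h | h
    · rw [if_pos h, zero_mul]; exact mul_nonneg (by positivity) (hq0 j)
    · rw [if_neg (by omega)]
      exact mul_le_mul_of_nonneg_right (by linarith [hm'.le]) (hq0 j)
  have hoS : Summable (fun j : ℕ => (if j ≤ 2*m+1 then 0 else (j:ℝ) - 2*m) * q j) :=
    Summable.of_nonneg_of_le hoTnn hoTle hmean.1
  have hoDnn : (0:ℝ) ≤ ∑' j : ℕ, (if j ≤ 2*m+1 then 0 else (j:ℝ) - 2*m) * q j :=
    tsum_nonneg hoTnn
  have hoTarget : (1 - b/(m:ℝ) + q (2*m+1)/(m:ℝ)) * m = (m:ℝ) - b + q (2*m+1) := by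
    field_simp
  -- ===== EVEN CASE =====
  have heA : Hpay (ue m) q = (1/((m:ℝ)+1)) *
      ∑ i ∈ (Finset.range (2*m+1)).filter (fun i => Even i),
        (2 * (∑ j ∈ Finset.range i, q j) + q i - 1) := by
    rw [hpay_eq (s := (Finset.range (2*m+1)).filter (fun i => Even i))
      (fun i hi => by
        rw [ue, if_neg]
        intro hc
        exact hi (Finset.mem_filter.mpr ⟨Finset.mem_range.mpr (by omega), hc.1⟩))
      (fun i => by rw [ue]; split <;> positivity) hq, Finset.mul_sum]
    refine Finset.sum_congr rfl (fun i hi => ?_)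
    obtain ⟨hir, hie⟩ := Finset.mem_filter.mp hi
    have hile : i ≤ 2*m := by
      have := Finset.mem_range.mp hir
      omega
    rw [ue, if_pos ⟨hie, hile⟩]
  have heSum : ∑ i ∈ (Finset.range (2*m+1)).filter (fun i => Even i),
      (2 * (∑ j ∈ Finset.range i, q j) + q i - 1) = ((m:ℝ)+1) * Hpay (ue m) q := by
    rw [heA]; field_simp
  have heD := diff_eq hq hmean ((Finset.range (2*m+1)).filter (fun i => Even i))
      (m:ℝ) 0 0
  have hecoef : ∀ j : ℕ,
      (2 * ((((Finset.range (2*m+1)).filter (fun i => Even i)).filter (fun i => j < i)).card : ℝ)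
        + (if j ∈ (Finset.range (2*m+1)).filter (fun i => Even i) then 1 else 0)
        - (((Finset.range (2*m+1)).filter (fun i => Even i)).card : ℝ) - (m:ℝ) + j
        - (if j = 0 then (0:ℝ) else 0)) * q j
      = (if j ≤ 2*m+1 then 0 else (j:ℝ) - (2*m+1)) * q j := by
    intro j
    congr 1
    rw [card_even_filter m j, card_even m]
    rw [if_congr (show (j ∈ (Finset.range (2*m+1)).filter (fun i => Even i)) ↔ Even j ∧ j ≤ 2*m by
      simp only [Finset.mem_filter, Finset.mem_range]
      constructor
      · rintro ⟨h1, h2⟩; exact ⟨h2, by omega⟩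
      · rintro ⟨h1, h2⟩; exact ⟨by omega, h1⟩) rfl rfl]
    rw [show (((m+1 : ℕ)) : ℝ) = (m:ℝ) + 1 by push_cast; ring]
    exact even_coef m j
  have heD' : ((m:ℝ)+1) * Hpay (ue m) q - ((m:ℝ) - b)
      = ∑' j : ℕ, (if j ≤ 2*m+1 then 0 else (j:ℝ) - (2*m+1)) * q j := by
    rw [← heSum]
    rw [show (m:ℝ) - b = (m:ℝ) - b + 0 * q 0 by ring, heD]
    exact tsum_congr hecoef
  have heTnn : ∀ j : ℕ, 0 ≤ (if j ≤ 2*m+1 then 0 else (j:ℝ) - (2*m+1)) * q j := by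
    intro j
    rcases le_or_gt j (2*m+1) with h | h
    · rw [if_pos h, zero_mul]
    · rw [if_neg (by omega)]
      have : (2*(m:ℝ)+1) < j := by exact_mod_cast h
      exact mul_nonneg (by linarith) (hq0 j)
  have heTle : ∀ j : ℕ, (if j ≤ 2*m+1 then 0 else (j:ℝ) - (2*m+1)) * q j ≤ (j:ℝ) * q j := by
    intro j
    rcases le_or_gt j (2*m+1) with h | h
    · rw [if_pos h, zero_mul]; exact mul_nonneg (by positivity) (hq0 j)
    · rw [if_neg (by omega)]
      exact mul_le_mul_of_nonneg_right (by linarith [hm'.le]) (hq0 j)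
  have heS : Summable (fun j : ℕ => (if j ≤ 2*m+1 then 0 else (j:ℝ) - (2*m+1)) * q j) :=
    Summable.of_nonneg_of_le heTnn heTle hmean.1
  have heDnn : (0:ℝ) ≤ ∑' j : ℕ, (if j ≤ 2*m+1 then 0 else (j:ℝ) - (2*m+1)) * q j :=
    tsum_nonneg heTnn
  have heTarget : (1 - (1+b)/((m:ℝ)+1)) * ((m:ℝ)+1) = (m:ℝ) - b := by
    field_simp
    ring
  refine ⟨?_, ⟨?_, ?_⟩, ?_, ⟨?_, ?_⟩⟩
  · -- odd inequality
    rw [← mul_le_mul_iff_of_pos_right hm']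
    rw [hoTarget]
    nlinarith [hoDnn, hoD']
  · -- odd equality → vanishing
    intro heq j hj
    have hzero : ∑' j : ℕ, (if j ≤ 2*m+1 then 0 else (j:ℝ) - 2*m) * q j = 0 := by
      rw [← hoD', heq, ← hoTarget]
      ring
    have hterm : (if j ≤ 2*m+1 then 0 else (j:ℝ) - 2*m) * q j ≤ 0 := by
      have := Summable.le_tsum hoS j (fun k _ => hoTnn k)
      rw [hzero] at this
      exact this
    have hterm0 : (if j ≤ 2*m+1 then 0 else (j:ℝ) - 2*m) * q j = 0 :=
      le_antisymm hterm (hoTnn j)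
    rw [if_neg (by omega)] at hterm0
    have hpos : (0:ℝ) < (j:ℝ) - 2*m := by
      have : (2*(m:ℝ)+2) ≤ j := by exact_mod_cast hj
      linarith
    rcases mul_eq_zero.mp hterm0 with h | h
    · exact absurd h (ne_of_gt hpos)
    · exact h
  · -- vanishing → odd equality
    intro hv
    have hzero : ∑' j : ℕ, (if j ≤ 2*m+1 then 0 else (j:ℝ) - 2*m) * q j = 0 := by
      rw [show (fun j : ℕ => (if j ≤ 2*m+1 then 0 else (j:ℝ) - 2*m) * q j)
          = fun _ => (0:ℝ) from funext (fun j => by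
        rcases le_or_gt j (2*m+1) with h | h
        · rw [if_pos h, zero_mul]
        · rw [hv j (by omega), mul_zero])]
      exact tsum_zero
    have hM : (m:ℝ) * Hpay (uo m) q = (m:ℝ) - b + q (2*m+1) := by
      linarith [hoD', hzero]
    apply mul_left_cancel₀ (ne_of_gt hm')
    rw [hM, mul_comm ((m:ℝ)) _, hoTarget]
  · -- even inequality
    rw [← mul_le_mul_iff_of_pos_right hm1']
    rw [heTarget]
    nlinarith [heDnn, heD']
  · -- even equality → vanishing
    intro heq j hj
    have hzero : ∑' j : ℕ, (if j ≤ 2*m+1 then 0 else (j:ℝ) - (2*m+1)) * q j = 0 := by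
      rw [← heD', heq, ← heTarget]
      ring
    have hterm : (if j ≤ 2*m+1 then 0 else (j:ℝ) - (2*m+1)) * q j ≤ 0 := by
      have := Summable.le_tsum heS j (fun k _ => heTnn k)
      rw [hzero] at this
      exact this
    have hterm0 : (if j ≤ 2*m+1 then 0 else (j:ℝ) - (2*m+1)) * q j = 0 :=
      le_antisymm hterm (heTnn j)
    rw [if_neg (by omega)] at hterm0
    have hpos : (0:ℝ) < (j:ℝ) - (2*m+1) := by
      have : (2*(m:ℝ)+2) ≤ j := by exact_mod_cast hj
      linarith
    rcases mul_eq_zero.mp hterm0 with h | h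
    · exact absurd h (ne_of_gt hpos)
    · exact h
  · -- vanishing → even equality
    intro hv
    have hzero : ∑' j : ℕ, (if j ≤ 2*m+1 then 0 else (j:ℝ) - (2*m+1)) * q j = 0 := by
      rw [show (fun j : ℕ => (if j ≤ 2*m+1 then 0 else (j:ℝ) - (2*m+1)) * q j)
          = fun _ => (0:ℝ) from funext (fun j => by
        rcases le_or_gt j (2*m+1) with h | h
        · rw [if_pos h, zero_mul]
        · rw [hv j (by omega), mul_zero])]
      exact tsum_zero
    have hM : ((m:ℝ)+1) * Hpay (ue m) q = (m:ℝ) - b := by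
      linarith [heD', hzero]
    apply mul_left_cancel₀ (ne_of_gt hm1')
    rw [hM, mul_comm ((m:ℝ)+1) _, heTarget]
end
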